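/- Let n ≥ 1 and let f(x) = f₀ + ∑_{j=1}^n f_j·x_j^{2d} + ∑_{α ∈ Ω} f_α·x^α, where f₀, f_j > 0, Ω is a finite set of lattice points in the interior of the simplex conv{0, 2d·e₁, …, 2d·e_n}, and for each α ∈ Ω write α = ∑_{j=0}^n λ_j^{(α)} α(j) with α(0) = 0, α(j) = 2d·e_j, λ_j^{(α)} ≥ 0, ∑_j λ_j^{(α)} = 1. Suppose there exist a_{α,j} ≥ 0 (for α ∈ Ω, 0 ≤ j ≤ n) with a_{α,j} = 0 iff λ_j^{(α)} = 0, such that (1) |f_α| ≤ ∏_{j=0}^n (a_{α,j}/λ_j^{(α)})^{λ_j^{(α)}} for all α ∈ Ω, and (2) f₀ ≥ ∑_{α∈Ω} a_{α,0} and f_j ≥ ∑_{α∈Ω} a_{α,j} for 1 ≤ j ≤ n (with the convention 0/0 = 1, 0⁰ = 1). Then f(x) ≥ 0 for all x ∈ ℝⁿ. -/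

import Mathlib

open Finset

theorem stmt_19 (n : ℕ) (hn : 1 ≤ n) (d : ℕ) (m : ℕ)
    (f0 : ℝ) (fj : Fin n → ℝ) (fα : Fin m → ℝ)
    (α : Fin m → Fin n → ℕ)
    (hf0 : 0 < f0) (hfj : ∀ j, 0 < fj j)
    (hαne : ∀ k, fα k ≠ 0)
    -- Ω lies in the interior of the simplex conv{0, 2d·e₁, …, 2d·eₙ}
    (hint : ∀ k, (∀ i, 0 < α k i) ∧ ∑ i, α k i < 2 * d)
    (a0 : Fin m → ℝ) (a : Fin m → Fin n → ℝ)
    (ha0 : ∀ k, 0 ≤ a0 k) (ha : ∀ k j, 0 ≤ a k j)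
    (ha0zero : ∀ k, a0 k = 0 ↔ 1 - (∑ i, (α k i : ℝ)) / (2 * d) = 0)
    (hazero : ∀ k j, a k j = 0 ↔ (α k j : ℝ) / (2 * d) = 0)
    (h1 : ∀ k, |fα k| ≤
        (a0 k / (1 - (∑ i, (α k i : ℝ)) / (2 * d))) ^ (1 - (∑ i, (α k i : ℝ)) / (2 * d)) *
          ∏ j, (a k j / ((α k j : ℝ) / (2 * d))) ^ ((α k j : ℝ) / (2 * d)))
    (h20 : ∑ k, a0 k ≤ f0)
    (h2 : ∀ j, ∑ k, a k j ≤ fj j) :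
    ∀ x : Fin n → ℝ,
      0 ≤ f0 + ∑ j, fj j * x j ^ (2 * d) + ∑ k, fα k * ∏ i, x i ^ α k i := by
  intro x
  have hxpow : ∀ j, 0 ≤ x j ^ (2 * d) := by
    intro j
    rw [pow_mul]
    exact pow_nonneg (sq_nonneg _) d
  -- key per-circuit inequality
  have key : ∀ k, 0 ≤ a0 k + ∑ j, a k j * x j ^ (2 * d) + fα k * ∏ i, x i ^ α k i := by
    intro k
    obtain ⟨hpos, hsum⟩ := hint k
    have hd : (0 : ℝ) < 2 * d := by
      have h' : 1 ≤ 2 * d := le_trans (le_trans hn (by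
        calc (n : ℕ) = ∑ _i : Fin n, 1 := by simp
        _ ≤ ∑ i, α k i := Finset.sum_le_sum fun i _ => hpos i)) hsum.le
      have : (0 : ℕ) < 2 * d := h'
      exact_mod_cast this
    set D : ℝ := 2 * d with hD
    set lam0 : ℝ := 1 - (∑ i, (α k i : ℝ)) / D with hlam0
    set lam : Fin n → ℝ := fun j => (α k j : ℝ) / D with hlam
    have hlam0pos : 0 < lam0 := by
      rw [hlam0, sub_pos, div_lt_one hd]
      have : ((∑ i, α k i : ℕ) : ℝ) < ((2 * d : ℕ) : ℝ) := by exact_mod_cast hsum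
      simpa using this
    have hlampos : ∀ j, 0 < lam j := fun j =>
      div_pos (by exact_mod_cast hpos j) hd
    have hwsum : lam0 + ∑ j, lam j = 1 := by
      simp only [hlam0, hlam]
      rw [← Finset.sum_div]
      ring
    -- weights and values on Fin (n+1)
    set w : Fin (n + 1) → ℝ := Fin.cons lam0 lam with hw
    set z : Fin (n + 1) → ℝ :=
      Fin.cons (a0 k / lam0) (fun j => a k j / lam j * x j ^ (2 * d)) with hz
    have hwnn : ∀ i ∈ Finset.univ, (0 : ℝ) ≤ w i := by
      intro i _
      refine Fin.cases ?_ ?_ i <;> simp [hw]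
      · exact hlam0pos.le
      · intro j; exact (hlampos j).le
    have hwsum' : ∑ i, w i = 1 := by
      rw [hw, Fin.sum_univ_succ]; simpa using hwsum
    have hznn : ∀ i ∈ Finset.univ, (0 : ℝ) ≤ z i := by
      intro i _
      refine Fin.cases ?_ ?_ i <;> simp [hz]
      · exact div_nonneg (ha0 k) hlam0pos.le
      · intro j
        exact mul_nonneg (div_nonneg (ha k j) (hlampos j).le) (hxpow j)
    have amgm := Real.geom_mean_le_arith_mean_weighted Finset.univ w z hwnn hwsum' hznn
    -- compute the arithmetic side
    have harith : ∑ i, w i * z i = a0 k + ∑ j, a k j * x j ^ (2 * d) := by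
      rw [Fin.sum_univ_succ]
      simp only [hw, hz, Fin.cons_zero, Fin.cons_succ]
      rw [mul_div_cancel₀ _ hlam0pos.ne']
      congr 1
      refine Finset.sum_congr rfl fun j _ => ?_
      field_simp
      rw [mul_assoc]
      exact mul_div_cancel_left₀ _ (hlampos j).ne'
    -- compute the geometric side
    have hgeom : ∏ i, z i ^ w i =
        ((a0 k / lam0) ^ lam0 * ∏ j, (a k j / lam j) ^ lam j) * ∏ i, |x i| ^ α k i := by
      rw [Fin.prod_univ_succ]
      simp only [hw, hz, Fin.cons_zero, Fin.cons_succ]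
      rw [mul_assoc, ← Finset.prod_mul_distrib]
      congr 1
      refine Finset.prod_congr rfl fun j _ => ?_
      have hb : (0 : ℝ) ≤ a k j / lam j := div_nonneg (ha k j) (hlampos j).le
      rw [Real.mul_rpow hb (hxpow j)]
      congr 1
      have hx2 : x j ^ (2 * d) = |x j| ^ (2 * d) := by
        rw [pow_mul, pow_mul, sq_abs]
      rw [hx2, ← Real.rpow_natCast |x j| (2 * d), ← Real.rpow_natCast |x j| (α k j),
        ← Real.rpow_mul (abs_nonneg _)]
      congr 1
      rw [hlam]
      push_cast
      field_simp
      rw [hD]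
      ring
    -- bound |fα k * ∏ x^α|
    have habs : |fα k * ∏ i, x i ^ α k i| ≤ a0 k + ∑ j, a k j * x j ^ (2 * d) := by
      rw [abs_mul]
      have h1' := h1 k
      have hprodnn : (0 : ℝ) ≤ ∏ i, |x i| ^ α k i :=
        Finset.prod_nonneg fun i _ => pow_nonneg (abs_nonneg _) _
      have hple : |∏ i, x i ^ α k i| = ∏ i, |x i| ^ α k i := by
        rw [Finset.abs_prod]
        exact Finset.prod_congr rfl fun i _ => abs_pow _ _
      rw [hple]
      calc |fα k| * ∏ i, |x i| ^ α k i
          ≤ ((a0 k / lam0) ^ lam0 * ∏ j, (a k j / lam j) ^ lam j) * ∏ i, |x i| ^ α k i :=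
            mul_le_mul_of_nonneg_right h1' hprodnn
        _ = ∏ i, z i ^ w i := hgeom.symm
        _ ≤ ∑ i, w i * z i := amgm
        _ = a0 k + ∑ j, a k j * x j ^ (2 * d) := harith
    have := neg_abs_le (fα k * ∏ i, x i ^ α k i)
    linarith [habs, this]
  -- assemble
  have hsum := Finset.sum_nonneg fun k (_ : k ∈ Finset.univ) => key k
  have hswap : ∑ k, ∑ j, a k j * x j ^ (2 * d) = ∑ j, (∑ k, a k j) * x j ^ (2 * d) := by
    rw [Finset.sum_comm]
    exact Finset.sum_congr rfl fun j _ => (Finset.sum_mul _ _ _).symm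
  rw [Finset.sum_add_distrib, Finset.sum_add_distrib, hswap] at hsum
  have hjle : ∑ j, (∑ k, a k j) * x j ^ (2 * d) ≤ ∑ j, fj j * x j ^ (2 * d) :=
    Finset.sum_le_sum fun j _ => mul_le_mul_of_nonneg_right (h2 j) (hxpow j)
  linarith [hsum, hjle, h20]
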